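/- Let 1 < p < ∞ and ‖θ‖_{p,*} ≤ α₁ + α₂, with g₁, g₂ the linear functions with bounded-dual-norm domains as above. Then for any b ∈ [0,1]: (g₁ □ g₂)(b·θ) ≤ (b/(α₁+α₂))·(‖θ‖_{p,*}·min(α₁,α₂)·‖x₁-x₂‖_p + ⟨θ, α₁x₁ + α₂x₂⟩) − min(α₁,α₂)·‖x₁-x₂‖_p. -/

import Mathlib

noncomputable def pnorm {n : ℕ} (p : ℝ) (v : Fin n → ℝ) : ℝ :=
  (∑ i, |v i| ^ p) ^ (1 / p)

def dot {n : ℕ} (v w : Fin n → ℝ) : ℝ := ∑ i, v i * w i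

lemma pnorm_nonneg {n : ℕ} (p : ℝ) (v : Fin n → ℝ) : 0 ≤ pnorm p v :=
  Real.rpow_nonneg (Finset.sum_nonneg fun _ _ => Real.rpow_nonneg (abs_nonneg _) _) _

lemma pnorm_smul {n : ℕ} {p : ℝ} (hp : 0 < p) (c : ℝ) (v : Fin n → ℝ) :
    pnorm p (c • v) = |c| * pnorm p v := by
  unfold pnorm
  have h1 : ∀ i : Fin n, |(c • v) i| ^ p = |c| ^ p * |v i| ^ p := by
    intro i
    simp only [Pi.smul_apply, smul_eq_mul, abs_mul]
    exact Real.mul_rpow (abs_nonneg _) (abs_nonneg _)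
  simp only [h1, ← Finset.mul_sum]
  rw [Real.mul_rpow (Real.rpow_nonneg (abs_nonneg _) _)
      (Finset.sum_nonneg fun i _ => Real.rpow_nonneg (abs_nonneg _) _)]
  congr 1
  rw [← Real.rpow_mul (abs_nonneg c), mul_one_div, div_self hp.ne', Real.rpow_one]

lemma pnorm_add_le {n : ℕ} {p : ℝ} (hp : 1 ≤ p) (v w : Fin n → ℝ) :
    pnorm p (v + w) ≤ pnorm p v + pnorm p w := by
  unfold pnorm
  exact Real.Lp_add_le Finset.univ v w hp

lemma exists_dual {n : ℕ} {p r : ℝ} (hp : 1 < p) (hpr : 1 / p + 1 / r = 1) (w : Fin n → ℝ) :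
    ∃ d : Fin n → ℝ, pnorm r d ≤ 1 ∧ dot d w = - pnorm p w := by
  have hpq : Real.HolderConjugate p r := Real.holderConjugate_iff.mpr ⟨hp, by simpa [one_div] using hpr⟩
  have hp0 : (0:ℝ) < p := hpq.pos
  have hr1 : 1 < r := hpq.symm.lt
  have hr0 : (0:ℝ) < r := hpq.symm.pos
  set N := pnorm p w with hN
  rcases eq_or_lt_of_le (pnorm_nonneg p w) with h0 | h0
  · refine ⟨0, ?_, ?_⟩
    · unfold pnorm
      simp only [Pi.zero_apply, abs_zero, Real.zero_rpow hr0.ne', Finset.sum_const,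
        smul_zero]
      rw [Real.zero_rpow (by positivity : (1:ℝ)/r ≠ 0)]
      exact zero_le_one
    · simp only [dot, Pi.zero_apply, zero_mul, Finset.sum_const_zero]
      rw [hN, ← h0, neg_zero]
  · -- N > 0
    have hNp : N ^ p = ∑ i, |w i| ^ p := by
      rw [hN]
      unfold pnorm
      rw [← Real.rpow_mul (Finset.sum_nonneg fun _ _ => Real.rpow_nonneg (abs_nonneg _) _),
        one_div, inv_mul_cancel₀ hp0.ne', Real.rpow_one]
    refine ⟨fun i => -(Real.sign (w i) * |w i| ^ (p - 1)) / N ^ (p - 1), ?_, ?_⟩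
    · have habs : ∀ i : Fin n,
          |(-(Real.sign (w i) * |w i| ^ (p - 1)) / N ^ (p - 1))| = |w i| ^ (p-1) / N ^ (p-1) := by
        intro i
        rw [abs_div, abs_neg, abs_mul, abs_of_nonneg (Real.rpow_nonneg (abs_nonneg _) _),
          abs_of_nonneg (Real.rpow_nonneg h0.le _)]
        by_cases h : w i = 0
        · simp [h, Real.zero_rpow (by linarith : p - 1 ≠ 0)]
        · rcases lt_or_gt_of_ne h with h' | h'
          · rw [Real.sign_of_neg h', abs_neg, abs_one, one_mul]
          · rw [Real.sign_of_pos h', abs_one, one_mul]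
      have key : pnorm r (fun i => -(Real.sign (w i) * |w i| ^ (p - 1)) / N ^ (p - 1)) = 1 := by
        unfold pnorm
        have h2 : ∀ i : Fin n,
            |(-(Real.sign (w i) * |w i| ^ (p - 1)) / N ^ (p - 1))| ^ r = |w i| ^ p / N ^ p := by
          intro i
          rw [habs i, Real.div_rpow (Real.rpow_nonneg (abs_nonneg _) _) (Real.rpow_nonneg h0.le _),
            ← Real.rpow_mul (abs_nonneg _), ← Real.rpow_mul h0.le, hpq.sub_one_mul_conj]
        simp only [h2, ← Finset.sum_div, ← hNp]
        rw [div_self (by positivity), Real.one_rpow]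
      rw [key]
    · unfold dot
      have h3 : ∀ i : Fin n,
          -(Real.sign (w i) * |w i| ^ (p - 1)) / N ^ (p - 1) * w i = -(|w i| ^ p) / N ^ (p-1) := by
        intro i
        by_cases h : w i = 0
        · simp [h, Real.zero_rpow (by positivity : p ≠ 0)]
        · have hw : (0:ℝ) < |w i| := abs_pos.mpr h
          have hsign : Real.sign (w i) * w i = |w i| := by
            rcases lt_or_gt_of_ne h with h' | h'
            · rw [Real.sign_of_neg h', abs_of_neg h']; ring
            · rw [Real.sign_of_pos h', abs_of_pos h']; ring
          have habs2 : |w i| ^ p = |w i| * |w i| ^ (p - 1) := by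
            have h5 := Real.rpow_add hw 1 (p - 1)
            rw [Real.rpow_one] at h5
            rw [← h5]
            congr 1
            ring
          rw [div_mul_eq_mul_div, habs2, neg_mul, mul_right_comm, hsign]
      simp only [h3]
      rw [← Finset.sum_div, Finset.sum_neg_distrib, ← hNp, neg_div, ← Real.rpow_sub h0]
      norm_num
      exact hN.symm

lemma dot_expand₁ {n : ℕ} (a e : ℝ) (u v x : Fin n → ℝ) :
    dot (a • u + e • v) x = a * dot u x + e * dot v x := by
  unfold dot
  rw [Finset.mul_sum, Finset.mul_sum, ← Finset.sum_add_distrib]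
  exact Finset.sum_congr rfl fun i _ => by simp; ring

lemma dot_expand₂ {n : ℕ} (a e : ℝ) (θ x y : Fin n → ℝ) :
    dot θ (a • x + e • y) = a * dot θ x + e * dot θ y := by
  unfold dot
  rw [Finset.mul_sum, Finset.mul_sum, ← Finset.sum_add_distrib]
  exact Finset.sum_congr rfl fun i _ => by simp; ring

lemma dot_sub_right {n : ℕ} (d x y : Fin n → ℝ) :
    dot d (x - y) = dot d x - dot d y := by
  unfold dot
  rw [← Finset.sum_sub_distrib]
  exact Finset.sum_congr rfl fun i _ => by simp [mul_sub]

theorem stmt_12 (n : ℕ) (p r α₁ α₂ b : ℝ) (hp : 1 < p) (hpr : 1 / p + 1 / r = 1)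
    (hα₁ : 0 < α₁) (hα₂ : 0 < α₂) (hb : b ∈ Set.Icc (0 : ℝ) 1)
    (x₁ x₂ θ : Fin n → ℝ) (hθ : pnorm r θ ≤ α₁ + α₂)
    (g₁ g₂ : (Fin n → ℝ) → EReal)
    (hg₁ : ∀ q, g₁ q = if pnorm r q ≤ α₁ then ((dot q x₁ : ℝ) : EReal) else ⊤)
    (hg₂ : ∀ q, g₂ q = if pnorm r q ≤ α₂ then ((dot q x₂ : ℝ) : EReal) else ⊤) :
    (⨅ q : Fin n → ℝ, g₁ q + g₂ (b • θ - q)) ≤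
      (((b / (α₁ + α₂)) *
          (pnorm r θ * min α₁ α₂ * pnorm p (x₁ - x₂) + dot θ (α₁ • x₁ + α₂ • x₂)) -
        min α₁ α₂ * pnorm p (x₁ - x₂) : ℝ) : EReal) := by
  obtain ⟨hb0, hb1⟩ := hb
  have hpq : Real.HolderConjugate p r := Real.holderConjugate_iff.mpr ⟨hp, by simpa [one_div] using hpr⟩
  have hr1 : 1 ≤ r := hpq.symm.lt.le
  have hr0 : (0:ℝ) < r := hpq.symm.pos
  have hα : (0:ℝ) < α₁ + α₂ := by linarith
  set T := pnorm r θ with hT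
  set N := pnorm p (x₁ - x₂) with hNdef
  set m := min α₁ α₂ with hm
  obtain ⟨d, hd1, hd2⟩ := exists_dual hp hpr (x₁ - x₂)
  set c := b / (α₁ + α₂) with hc
  set s := m * (1 - c * T) with hs
  have hT0 : 0 ≤ T := pnorm_nonneg _ _
  have hN0 : 0 ≤ N := pnorm_nonneg _ _
  have hc0 : 0 ≤ c := div_nonneg hb0 hα.le
  have hct0 : 0 ≤ c * T := mul_nonneg hc0 hT0
  have hct1 : c * T ≤ 1 := by
    rw [hc, div_mul_eq_mul_div, div_le_one hα]
    calc b * T ≤ 1 * T := mul_le_mul_of_nonneg_right hb1 hT0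
    _ = T := one_mul T
    _ ≤ α₁ + α₂ := hθ
  have hm0 : 0 ≤ m := le_min hα₁.le hα₂.le
  have hm1 : m ≤ α₁ := min_le_left _ _
  have hm2 : m ≤ α₂ := min_le_right _ _
  have hs0 : 0 ≤ s := mul_nonneg hm0 (by linarith)
  set q : Fin n → ℝ := (c * α₁) • θ + s • d with hq
  have hbθq : b • θ - q = (c * α₂) • θ + (-s) • d := by
    rw [hq]
    funext i
    simp only [Pi.sub_apply, Pi.add_apply, Pi.smul_apply, smul_eq_mul]
    rw [hc]
    field_simp
    ring
  have hnd0 : 0 ≤ pnorm r d := pnorm_nonneg _ _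
  have hnq1 : pnorm r q ≤ α₁ := by
    calc pnorm r q ≤ pnorm r ((c * α₁) • θ) + pnorm r (s • d) := pnorm_add_le hr1 _ _
    _ = (c * α₁) * T + s * pnorm r d := by
        rw [pnorm_smul hr0, pnorm_smul hr0, abs_of_nonneg (by positivity),
          abs_of_nonneg hs0]
    _ ≤ (c * α₁) * T + s * 1 := by
        gcongr
    _ ≤ α₁ := by
        rw [hs, mul_one]
        nlinarith [mul_nonneg (sub_nonneg.mpr hm1) (sub_nonneg.mpr hct1)]
  have hnq2 : pnorm r (b • θ - q) ≤ α₂ := by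
    rw [hbθq]
    calc pnorm r ((c * α₂) • θ + (-s) • d)
        ≤ pnorm r ((c * α₂) • θ) + pnorm r ((-s) • d) := pnorm_add_le hr1 _ _
    _ = (c * α₂) * T + s * pnorm r d := by
        rw [pnorm_smul hr0, pnorm_smul hr0, abs_of_nonneg (by positivity),
          abs_neg, abs_of_nonneg hs0]
    _ ≤ (c * α₂) * T + s * 1 := by
        gcongr
    _ ≤ α₂ := by
        rw [hs, mul_one]
        nlinarith [mul_nonneg (sub_nonneg.mpr hm2) (sub_nonneg.mpr hct1)]
  refine le_trans (iInf_le _ q) ?_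
  rw [hg₁ q, hg₂ (b • θ - q), if_pos hnq1, if_pos hnq2, ← EReal.coe_add,
    EReal.coe_le_coe_iff]
  have hdd : dot d x₁ - dot d x₂ = -N := by
    rw [← dot_sub_right]; exact hd2
  rw [hbθq, hq, dot_expand₁, dot_expand₁, dot_expand₂, hs]
  apply le_of_eq
  linear_combination (m * (1 - c * T)) * hdd
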